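/- Let τ ∈ [1..⌊n/2⌋]. For every position j such that both j and j-1 belong to R(τ,T), the τ-runs at j-1 and j agree: they have the same Lyndon root, the same run end, the same tail, the same full run end, and the same type. -/

import Mathlib

namespace LZ

variable {α : Type*}

/-- `SubstrEq T i j ℓ`: the length-`ℓ` substrings of `T` (1-based positions)
starting at `i` and `j` are equal. -/
def SubstrEq (T : ℕ → α) (i j ℓ : ℕ) : Prop := ∀ t < ℓ, T (i + t) = T (j + t)

/-- `perP P ℓ`: the shortest period of the prefix `P[1..ℓ]` of the (1-based) pattern `P`. -/
noncomputable def perP (P : ℕ → α) (ℓ : ℕ) : ℕ :=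
  sInf {p | 0 < p ∧ ∀ t, t + p < ℓ → P (1 + t) = P (1 + t + p)}

/-- A pattern `P` of length `m` is `τ`-periodic if `m ≥ 3τ - 1` and
`per(P[1..3τ-1]) ≤ τ/3`. -/
noncomputable def IsPeriodicPat (τ : ℕ) (P : ℕ → α) (m : ℕ) : Prop :=
  3 * τ - 1 ≤ m ∧ 3 * perP P (3 * τ - 1) ≤ τ

/-- `runendP τ P m = 1 + p + lcp(P[1..m], P[1+p..m])` where `p = per(P[1..3τ-1])`. -/
noncomputable def runendP (τ : ℕ) (P : ℕ → α) (m : ℕ) : ℕ :=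
  1 + perP P (3 * τ - 1) +
    sSup {ℓ | perP P (3 * τ - 1) + ℓ ≤ m ∧
      ∀ t < ℓ, P (1 + t) = P (1 + perP P (3 * τ - 1) + t)}

/-- `rotP P p δ`: the length-`p` substring `P[1+δ..1+δ+p)` (a rotation of `P[1..p]`
when `P` has period `p`). -/
def rotP (P : ℕ → α) (p δ : ℕ) : List α := (List.range p).map fun t => P (1 + δ + t)

/-- The Lyndon root of a `τ`-periodic pattern `P`: the lexicographically smallest
rotation `P[1+δ..1+δ+p)`, `δ ∈ [0..p)`, where `p = per(P[1..3τ-1])`. -/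
noncomputable def rootP [LinearOrder α] (τ : ℕ) (P : ℕ → α) : List α :=
  ((List.range (perP P (3 * τ - 1))).map (rotP P (perP P (3 * τ - 1)))).foldr min
    (rotP P (perP P (3 * τ - 1)) 0)

/-- `headP τ P = |H'|` where `P[1..runend) = H' H^k H''` with `H = rootP τ P`:
the smallest offset `s` at which the Lyndon root occurs. -/
noncomputable def headP [LinearOrder α] (τ : ℕ) (P : ℕ → α) : ℕ :=
  sInf {s | rotP P (perP P (3 * τ - 1)) s = rootP τ P}

/-- `tailP τ P m = |H''|` in the factorization `P[1..runend) = H' H^k H''`. -/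
noncomputable def tailP [LinearOrder α] (τ : ℕ) (P : ℕ → α) (m : ℕ) : ℕ :=
  (runendP τ P m - 1 - headP τ P) % perP P (3 * τ - 1)

/-- `runendfullP τ P m = runendP τ P m - tailP τ P m`. -/
noncomputable def runendfullP [LinearOrder α] (τ : ℕ) (P : ℕ → α) (m : ℕ) : ℕ :=
  runendP τ P m - tailP τ P m

/-- `expP τ P m = k` in the factorization `P[1..runend) = H' H^k H''`. -/
noncomputable def expP [LinearOrder α] (τ : ℕ) (P : ℕ → α) (m : ℕ) : ℕ :=
  (runendP τ P m - 1 - headP τ P) / perP P (3 * τ - 1)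

/-- `typePosP τ P m`: the type of `P` is `+1`, i.e. `runend(P) ≤ |P|` and
`P[runend(P)] ≻ P[runend(P) - p]`. The type is `-1` iff this fails. -/
noncomputable def typePosP [LinearOrder α] (τ : ℕ) (P : ℕ → α) (m : ℕ) : Prop :=
  runendP τ P m ≤ m ∧ P (runendP τ P m - perP P (3 * τ - 1)) < P (runendP τ P m)

/-- Length of the longest common prefix of patterns `P[1..m₁]` and `Q[1..m₂]`. -/
noncomputable def lcpP (P Q : ℕ → α) (m₁ m₂ : ℕ) : ℕ :=
  sSup {ℓ | ℓ ≤ m₁ ∧ ℓ ≤ m₂ ∧ ∀ t < ℓ, P (1 + t) = Q (1 + t)}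

/-- The pattern `P[1..m]` as a list. -/
def toListP (P : ℕ → α) (m : ℕ) : List α := (List.range m).map fun t => P (1 + t)

/-- The suffix `T[j..]` of the text, viewed as a 1-based pattern. -/
def sufP (T : ℕ → α) (j : ℕ) : ℕ → α := fun k => T (j + k - 1)

/-- `Rset τ n T`: positions `i ∈ [1..n-3τ+2]` with `per(T[i..i+3τ-1)) ≤ τ/3`. -/
noncomputable def Rset (τ n : ℕ) (T : ℕ → α) : Set ℕ :=
  {i | 1 ≤ i ∧ i + 3 * τ ≤ n + 2 ∧ 3 * perP (sufP T i) (3 * τ - 1) ≤ τ}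

/-- The end `e(j)` of the `τ`-run containing position `j ∈ Rset τ n T`:
`e(j) = j + p + lcp(T[j..n], T[j+p..n])`. -/
noncomputable def runEndT (τ n : ℕ) (T : ℕ → α) (j : ℕ) : ℕ :=
  j + runendP τ (sufP T j) (n + 1 - j) - 1

/-- The Lyndon root of the `τ`-run at text position `j`. -/
noncomputable def rootT [LinearOrder α] (τ : ℕ) (T : ℕ → α) (j : ℕ) : List α :=
  rootP τ (sufP T j)

/-- `head` of the `τ`-run at text position `j`. -/
noncomputable def headT [LinearOrder α] (τ : ℕ) (T : ℕ → α) (j : ℕ) : ℕ :=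
  headP τ (sufP T j)

/-- `tail` of the `τ`-run at text position `j`. -/
noncomputable def tailT [LinearOrder α] (τ n : ℕ) (T : ℕ → α) (j : ℕ) : ℕ :=
  tailP τ (sufP T j) (n + 1 - j)

/-- The full run end `efull(j) = e(j) - tail(j)` of the `τ`-run at position `j`. -/
noncomputable def runEndFullT [LinearOrder α] (τ n : ℕ) (T : ℕ → α) (j : ℕ) : ℕ :=
  j + runendfullP τ (sufP T j) (n + 1 - j) - 1

/-- The exponent of the `τ`-run at text position `j`. -/
noncomputable def expT [LinearOrder α] (τ n : ℕ) (T : ℕ → α) (j : ℕ) : ℕ :=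
  expP τ (sufP T j) (n + 1 - j)

/-- The type of text position `j` is `+1`. (Type is `-1` iff this fails.) -/
noncomputable def typePosT [LinearOrder α] (τ n : ℕ) (T : ℕ → α) (j : ℕ) : Prop :=
  typePosP τ (sufP T j) (n + 1 - j)

/-- Starting positions of maximal blocks of `Rset`-positions (starts of maximal `τ`-runs). -/
noncomputable def Rprim (τ n : ℕ) (T : ℕ → α) : Set ℕ :=
  {j | j ∈ Rset τ n T ∧ j - 1 ∉ Rset τ n T}

/-- Positions of `Rset` of type `-1`. -/
noncomputable def RsetMinus [LinearOrder α] (τ n : ℕ) (T : ℕ → α) : Set ℕ :=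
  {j | j ∈ Rset τ n T ∧ ¬ typePosT τ n T j}

/-- `OccSub T n i ℓ`: the set of starting positions of occurrences of the
substring `T[i..i+ℓ)` in the length-`n` text `T`. -/
def OccSub (T : ℕ → α) (n i ℓ : ℕ) : Set ℕ :=
  {q | 1 ≤ q ∧ q + ℓ ≤ n + 1 ∧ SubstrEq T q i ℓ}

/-- `RMinMinus τ n T`: positions `j ∈ R⁻(τ,T)` with
`j = min (Occ(T[j..e(j)), T) ∩ R⁻(τ,T))`. -/
noncomputable def RMinMinus [LinearOrder α] (τ n : ℕ) (T : ℕ → α) : Set ℕ :=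
  {j | j ∈ RsetMinus τ n T ∧
    j = sInf (OccSub T n j (runEndT τ n T j - j) ∩ RsetMinus τ n T)}

/-- `eminT τ n T j = max {j' ∈ [j..n] : [j..j') ⊆ RMinMinus τ n T}`. -/
noncomputable def eminT [LinearOrder α] (τ n : ℕ) (T : ℕ → α) (j : ℕ) : ℕ :=
  sSup {j' | j ≤ j' ∧ j' ≤ n ∧ ∀ t, j ≤ t → t < j' → t ∈ RMinMinus τ n T}

/-- `S` is a `τ`-synchronizing set of the length-`n` text `T`:
`S ⊆ [1..n-2τ+1]`, consistency (equal length-`2τ` contexts give equal membership),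
and density (`[i..i+τ) ∩ S ≠ ∅` iff `i ∉ Rset τ n T`, for `i ∈ [1..n-3τ+2]`). -/
noncomputable def SyncSet (τ n : ℕ) (T : ℕ → α) (S : Set ℕ) : Prop :=
  (∀ s ∈ S, 1 ≤ s ∧ s + 2 * τ ≤ n + 1) ∧
  (∀ i j, 1 ≤ i → i + 2 * τ ≤ n + 1 → 1 ≤ j → j + 2 * τ ≤ n + 1 →
    SubstrEq T i j (2 * τ) → (i ∈ S ↔ j ∈ S)) ∧
  (∀ i, 1 ≤ i → i + 3 * τ ≤ n + 2 →
    ((Set.Ico i (i + τ) ∩ S).Nonempty ↔ i ∉ Rset τ n T))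

/-- `succS S j = min {j' ∈ S : j' ≥ j}`. -/
noncomputable def succS (S : Set ℕ) (j : ℕ) : ℕ := sInf {j' | j' ∈ S ∧ j ≤ j'}

end LZ

namespace RunAux

variable {α : Type*}

/-- `f` has period `p` on the window `[0, L)`. -/
def HasPer (f : ℕ → α) (p L : ℕ) : Prop := ∀ t, t + p < L → f t = f (t + p)

lemma hasPer_mono {f : ℕ → α} {p L L'} (h : HasPer f p L) (hL : L' ≤ L) : HasPer f p L' :=
  fun t ht => h t (lt_of_lt_of_le ht hL)

lemma hasPer_chain {f : ℕ → α} {g L : ℕ} (h : HasPer f g L) :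
    ∀ k a, a + k * g < L → f a = f (a + k * g) := by
  intro k
  induction k with
  | zero => simp
  | succ k IH =>
    intro a ha
    have hg0 : a + g + k * g = a + (k+1) * g := by ring
    have h1 : a + g + k * g < L := by omega
    have e1 : f a = f (a + g) := by
      by_cases hgz : g = 0
      · simp [hgz]
      · exact h a (by omega)
    rw [e1]
    have := IH (a + g) h1
    rw [this, hg0]

lemma hasPer_congr_mod {f : ℕ → α} {g L : ℕ} (h : HasPer f g L) (hg : 0 < g)
    {a b : ℕ} (ha : a < L) (hb : b < L) (hab : a % g = b % g) : f a = f b := by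
  have key : ∀ x y : ℕ, x ≤ y → y < L → x % g = y % g → f x = f y := by
    intro x y hle hy hxy
    have hd : g ∣ y - x := (Nat.modEq_iff_dvd' hle).mp hxy
    obtain ⟨k, hk⟩ := hd
    rw [mul_comm] at hk
    have : f x = f (x + k * g) := hasPer_chain h k x (by omega)
    rw [this]; congr 1; omega
  rcases le_total a b with hle | hle
  · exact key a b hle hb hab
  · exact (key b a hle ha hab.symm).symm

/-- Fine–Wilf (weak form): two periods `p, q` with `p + q ≤ L` imply period `gcd p q`. -/
lemma fine_wilf : ∀ N p q L (f : ℕ → α), p + q ≤ N → 0 < p → 0 < q → p + q ≤ L →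
    HasPer f p L → HasPer f q L → HasPer f (Nat.gcd p q) L := by
  intro N
  induction N using Nat.strong_induction_on with
  | _ N IH =>
    intro p q L f hN hp hq hL hfp hfq
    have step : ∀ p q, p < q → p + q ≤ N → 0 < p → p + q ≤ L →
        HasPer f p L → HasPer f q L → HasPer f (Nat.gcd p q) L := by
      intro p q hlt hN hp hL hfp hfq
      have hq' : HasPer f (q - p) (L - p) := by
        intro t ht
        have h1 : t + q < L := by omega
        rw [hfq t h1]
        have h2 : (t + (q - p)) + p = t + q := by omega
        have := hfp (t + (q - p)) (by omega)
        rw [h2] at this; exact this.symm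
      have hp' : HasPer f p (L - p) := hasPer_mono hfp (by omega)
      have hg : HasPer f (Nat.gcd p (q - p)) (L - p) :=
        IH (p + (q - p)) (by omega) p (q - p) (L - p) f le_rfl hp (by omega) (by omega) hp' hq'
      have hgcd : Nat.gcd p (q - p) = Nat.gcd p q := by
        conv_rhs => rw [show q = (q - p) + p by omega]
        rw [Nat.gcd_add_self_right]
      rw [hgcd] at hg
      set g := Nat.gcd p q with hgdef
      have hg0 : 0 < g := Nat.gcd_pos_of_pos_left _ hp
      have hgq : g ∣ q - p := Nat.dvd_sub (Nat.gcd_dvd_right p q) (Nat.gcd_dvd_left p q)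
      have hgqp : g ≤ q - p := Nat.le_of_dvd (by omega) hgq
      intro t ht
      by_cases hcase : t + g < L - p
      · exact hg t hcase
      · have htp : p ≤ t := by omega
        have e1 : f (t - p) = f t := by
          have := hfp (t - p) (by omega)
          rwa [Nat.sub_add_cancel htp] at this
        have e2 : f (t + g - p) = f (t + g) := by
          have := hfp (t + g - p) (by omega)
          rwa [Nat.sub_add_cancel (by omega)] at this
        have e3 : f (t - p) = f (t - p + g) := hg (t - p) (by omega)
        rw [← e1, e3, ← e2]; congr 1; omega
    rcases lt_trichotomy p q with h | h | h
    · exact step p q h hN hp hL hfp hfq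
    · subst h; simpa [Nat.gcd_self] using hfp
    · rw [Nat.gcd_comm]; exact step q p h (by omega) hq (by omega) hfq hfp

/-- Minimal period of `f` on `[0, L)`. -/
noncomputable def minPer (f : ℕ → α) (L : ℕ) : ℕ := sInf {p | 0 < p ∧ HasPer f p L}

lemma minPer_mem {f : ℕ → α} {L : ℕ} (hL : 0 < L) :
    0 < minPer f L ∧ HasPer f (minPer f L) L := by
  have hne : {p | 0 < p ∧ HasPer f p L}.Nonempty :=
    ⟨L, hL, fun t ht => absurd ht (by omega)⟩
  exact Nat.sInf_mem hne

lemma minPer_le {f : ℕ → α} {L p : ℕ} (hp : 0 < p) (h : HasPer f p L) : minPer f L ≤ p :=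
  Nat.sInf_le ⟨hp, h⟩


/-- If two rotations at offsets `δ1 < δ2 < p` of a `p`-periodic window coincide,
then `δ2 - δ1` is also a period. -/
lemma per_of_rot_eq {f : ℕ → α} {p W : ℕ} (hper : HasPer f p W) (hW : 2 * p ≤ W)
    {δ1 δ2 : ℕ} (h12 : δ1 < δ2) (h2 : δ2 < p)
    (heq : ∀ t < p, f (δ1 + t) = f (δ2 + t)) : HasPer f (δ2 - δ1) W := by
  intro x
  induction x using Nat.strong_induction_on with
  | _ x IH =>
    intro hx
    have hmid : ∀ y, δ1 ≤ y → y < δ1 + p → f y = f (y + (δ2 - δ1)) := by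
      intro y hy1 hy2
      have := heq (y - δ1) (by omega)
      rw [show δ1 + (y - δ1) = y by omega, show δ2 + (y - δ1) = y + (δ2 - δ1) by omega] at this
      exact this
    rcases lt_or_ge x δ1 with hlt | hge
    · have e1 : f x = f (x + p) := hper x (by omega)
      have e2 : f (x + (δ2 - δ1)) = f (x + (δ2 - δ1) + p) := hper _ (by omega)
      have e3 : f (x + p) = f (x + p + (δ2 - δ1)) := hmid (x + p) (by omega) (by omega)
      rw [e1, e3, e2]; congr 1; omega
    · rcases lt_or_ge x (δ1 + p) with hlt2 | hge2
      · exact hmid x hge hlt2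
      · have e1 : f (x - p) = f x := by
          have := hper (x - p) (by omega)
          rwa [Nat.sub_add_cancel (by omega)] at this
        have e2 : f (x + (δ2 - δ1) - p) = f (x + (δ2 - δ1)) := by
          have := hper (x + (δ2 - δ1) - p) (by omega)
          rwa [Nat.sub_add_cancel (by omega)] at this
        have e3 : f (x - p) = f (x - p + (δ2 - δ1)) := IH (x - p) (by omega) (by omega)
        rw [← e1, e3, ← e2]; congr 1; omega

variable {β : Type*} [LinearOrder β]

lemma foldr_min_le (l : List β) (b : β) : ∀ x ∈ l, l.foldr min b ≤ x := by
  induction l with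
  | nil => simp
  | cons a l IH =>
    intro x hx
    rcases List.mem_cons.mp hx with rfl | hx
    · exact min_le_left _ _
    · exact le_trans (min_le_right _ _) (IH x hx)

lemma foldr_min_le_init (l : List β) (b : β) : l.foldr min b ≤ b := by
  induction l with
  | nil => simp
  | cons a l IH => exact le_trans (min_le_right _ _) IH

lemma foldr_min_mem (l : List β) (b : β) : l.foldr min b = b ∨ l.foldr min b ∈ l := by
  induction l with
  | nil => left; rfl
  | cons a l IH =>
    rcases le_total a (l.foldr min b) with h | h
    · right; simp [List.foldr_cons, min_eq_left h]
    · rcases IH with h1 | h1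
      · left; rw [List.foldr_cons, min_eq_right h, h1]
      · right; simp only [List.foldr_cons, min_eq_right h]; exact List.mem_cons_of_mem _ h1


/-- Part A: the minimal periods of the `3τ-1` windows at two adjacent positions agree. -/
lemma minPer_shift (f g : ℕ → α) (hg : ∀ t, g t = f (t + 1))
    (τ : ℕ) (hτ : 1 ≤ τ) (hpf : 3 * minPer f (3 * τ - 1) ≤ τ)
    (hqg : 3 * minPer g (3 * τ - 1) ≤ τ) :
    minPer f (3 * τ - 1) = minPer g (3 * τ - 1) := by
  set ℓ := 3 * τ - 1 with hℓ
  have hℓ0 : 0 < ℓ := by omega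
  obtain ⟨hp0, hfp⟩ := minPer_mem (f := f) hℓ0
  obtain ⟨hq0, hgq⟩ := minPer_mem (f := g) hℓ0
  set p := minPer f ℓ with hpdef
  set q := minPer g ℓ with hqdef
  have hτ3 : 3 ≤ τ := by omega
  -- g has period p on [0, ℓ-1)
  have hgp : HasPer g p (ℓ - 1) := by
    intro t ht
    rw [hg t, hg (t + p)]
    have := hfp (t + 1) (by omega)
    rw [this]; congr 1; omega
  have hpq : p + q ≤ ℓ - 1 := by omega
  set G := Nat.gcd p q with hGdef
  have hG0 : 0 < G := Nat.gcd_pos_of_pos_left _ hp0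
  have hGp : G ∣ p := Nat.gcd_dvd_left p q
  have hGq : G ∣ q := Nat.gcd_dvd_right p q
  have hGle_p : G ≤ p := Nat.le_of_dvd hp0 hGp
  have hGle_q : G ≤ q := Nat.le_of_dvd hq0 hGq
  have hG : HasPer g G (ℓ - 1) :=
    fine_wilf (p + q) p q (ℓ - 1) g le_rfl hp0 hq0 hpq hgp (hasPer_mono hgq (by omega))
  -- g has period G on the full window [0, ℓ)
  have hQG : HasPer g G ℓ := by
    intro t ht
    by_cases hc : t + G < ℓ - 1
    · exact hG t hc
    · have ht' : t + G = ℓ - 1 := by omega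
      have e1 : g (ℓ - 1 - q) = g (ℓ - 1) := by
        have := hgq (ℓ - 1 - q) (by omega)
        rwa [show ℓ - 1 - q + q = ℓ - 1 by omega] at this
      have hdvd : G ∣ q - G := Nat.dvd_sub hGq dvd_rfl
      have hk : (q - G) / G * G = q - G := Nat.div_mul_cancel hdvd
      have e2 : g (ℓ - 1 - q) = g (ℓ - 1 - q + (q - G) / G * G) :=
        hasPer_chain hG ((q - G) / G) (ℓ - 1 - q) (by rw [hk]; omega)
      rw [hk] at e2
      rw [show ℓ - 1 - q + (q - G) = ℓ - 1 - G by omega] at e2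
      have final : g (ℓ - 1 - G) = g (ℓ - 1) := e2.symm.trans e1
      rw [show t = ℓ - 1 - G by omega, show ℓ - 1 - G + G = ℓ - 1 by omega]
      exact final
  have hqG : q = G := le_antisymm (minPer_le hG0 hQG) hGle_q
  -- f has period G on the full window [0, ℓ)
  have hPG : HasPer f G ℓ := by
    intro t ht
    cases t with
    | zero =>
      have e1 : f 0 = f p := by simpa using hfp 0 (by omega)
      have e2 : g (p - 1) = f p := by rw [hg]; congr 1; omega
      have e3 : g (G - 1) = f G := by rw [hg]; congr 1; omega
      have hdvd : G ∣ p - G := Nat.dvd_sub hGp dvd_rfl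
      have hk : (p - G) / G * G = p - G := Nat.div_mul_cancel hdvd
      have e4 : g (G - 1) = g (G - 1 + (p - G) / G * G) :=
        hasPer_chain hG ((p - G) / G) (G - 1) (by rw [hk]; omega)
      rw [hk, show G - 1 + (p - G) = p - 1 by omega] at e4
      simp only [Nat.zero_add]
      rw [e1, ← e2, ← e4, e3]
    | succ s =>
      have := hG s (by omega)
      rw [hg s, hg (s + G)] at this
      rw [this]; congr 1; omega
  have hpG : p = G := le_antisymm (minPer_le hG0 hPG) hGle_p
  rw [hpG, hqG]


noncomputable def ExtLen (f : ℕ → α) (p m : ℕ) : ℕ :=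
  sSup {x | p + x ≤ m ∧ ∀ t < x, f t = f (p + t)}

lemma extLen_shift (f g : ℕ → α) (hg : ∀ t, g t = f (t + 1)) {p ℓ m : ℕ}
    (hp0 : 0 < p) (hpℓ : p < ℓ) (hf : HasPer f p ℓ) (hpm : p ≤ m) :
    ExtLen f p (m + 1) = ExtLen g p m + 1 := by
  unfold ExtLen
  set Sf := {x | p + x ≤ m + 1 ∧ ∀ t < x, f t = f (p + t)} with hSf
  set Sg := {x | p + x ≤ m ∧ ∀ t < x, g t = g (p + t)} with hSg
  have hbf : BddAbove Sf := ⟨m + 1, fun x hx => by have := hx.1; omega⟩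
  have hbg : BddAbove Sg := ⟨m, fun x hx => by have := hx.1; omega⟩
  have hnef : Sf.Nonempty := ⟨0, by omega, fun t ht => absurd ht (by omega)⟩
  have hneg : Sg.Nonempty := ⟨0, by omega, fun t ht => absurd ht (by omega)⟩
  have hMg := Nat.sSup_mem hneg hbg
  set Mg := sSup Sg with hMgdef
  have hmem : Mg + 1 ∈ Sf := by
    refine ⟨by have := hMg.1; omega, ?_⟩
    intro t ht
    cases t with
    | zero => simpa using hf 0 (by omega)
    | succ s =>
      have h2 := hMg.2 s (by omega)
      rw [hg s, hg (p + s)] at h2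
      rw [h2]; congr 1
  have hub : ∀ x ∈ Sf, x ≤ Mg + 1 := by
    intro x hx
    cases x with
    | zero => omega
    | succ y =>
      have hy : y ∈ Sg := by
        refine ⟨by have := hx.1; omega, ?_⟩
        intro t ht
        have h2 := hx.2 (t + 1) (by omega)
        rw [hg t, hg (p + t), h2]; congr 1
      have := le_csSup hbg hy
      omega
  exact le_antisymm (csSup_le hnef hub) (le_csSup hbf hmem)

def Rot (f : ℕ → α) (p δ : ℕ) : List α := (List.range p).map fun t => f (δ + t)

lemma rot_succ (f g : ℕ → α) (hg : ∀ t, g t = f (t + 1)) (p δ : ℕ) :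
    Rot g p δ = Rot f p (δ + 1) := by
  unfold Rot
  apply List.map_congr_left
  intro t _
  rw [hg]; congr 1; omega

lemma rot_wrap (f g : ℕ → α) (hg : ∀ t, g t = f (t + 1)) {p ℓ : ℕ}
    (h2p : 2 * p ≤ ℓ) (hf : HasPer f p ℓ) : Rot f p 0 = Rot g p (p - 1) := by
  unfold Rot
  apply List.map_congr_left
  intro t ht
  have htp := List.mem_range.mp ht
  rw [hg]
  have h1 := hf t (by omega)
  rw [show (0 : ℕ) + t = t by omega, h1]; congr 1; omega

section Ordered
variable [LinearOrder α]

noncomputable def RootOf (f : ℕ → α) (p : ℕ) : List α :=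
  ((List.range p).map (Rot f p)).foldr min (Rot f p 0)

noncomputable def HeadOf (f : ℕ → α) (p : ℕ) : ℕ := sInf {s | Rot f p s = RootOf f p}

lemma rootOf_le (f : ℕ → α) {p δ : ℕ} (hδ : δ < p) : RootOf f p ≤ Rot f p δ :=
  foldr_min_le _ _ _ (List.mem_map_of_mem (List.mem_range.mpr hδ))

lemma rootOf_exists (f : ℕ → α) {p : ℕ} (hp : 0 < p) : ∃ δ < p, RootOf f p = Rot f p δ := by
  have h := foldr_min_mem ((List.range p).map (Rot f p)) (Rot f p 0)
  rcases h with h | h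
  · exact ⟨0, hp, h⟩
  · obtain ⟨δ, hδ, hEq⟩ := List.mem_map.mp h
    exact ⟨δ, List.mem_range.mp hδ, hEq.symm⟩

lemma root_shift (f g : ℕ → α) (hg : ∀ t, g t = f (t + 1)) {p ℓ : ℕ}
    (hp0 : 0 < p) (h2p : 2 * p ≤ ℓ) (hf : HasPer f p ℓ) : RootOf f p = RootOf g p := by
  apply le_antisymm
  · obtain ⟨δ, hδ, hEq⟩ := rootOf_exists g hp0
    by_cases hc : δ + 1 < p
    · rw [hEq, rot_succ f g hg p δ]
      exact rootOf_le f hc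
    · have hδp : δ = p - 1 := by omega
      rw [hEq, hδp, ← rot_wrap f g hg h2p hf]
      exact rootOf_le f hp0
  · obtain ⟨δ, hδ, hEq⟩ := rootOf_exists f hp0
    cases δ with
    | zero =>
      rw [hEq, rot_wrap f g hg h2p hf]
      exact rootOf_le g (by omega)
    | succ s =>
      rw [hEq, ← rot_succ f g hg p s]
      exact rootOf_le g (by omega)

lemma headOf_spec (f : ℕ → α) {p : ℕ} (hp0 : 0 < p) :
    HeadOf f p < p ∧ Rot f p (HeadOf f p) = RootOf f p := by
  obtain ⟨δ, hδ, hEq⟩ := rootOf_exists f hp0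
  have hne : {s | Rot f p s = RootOf f p}.Nonempty := ⟨δ, hEq.symm⟩
  have hmem := Nat.sInf_mem hne
  have hle : HeadOf f p ≤ δ := Nat.sInf_le hEq.symm
  exact ⟨lt_of_le_of_lt hle hδ, hmem⟩

lemma head_shift (f g : ℕ → α) (hg : ∀ t, g t = f (t + 1)) {p ℓ : ℕ}
    (hp0 : 0 < p) (h2p : 2 * p ≤ ℓ) (hf : HasPer f p ℓ)
    (hgood : HasPer g p ℓ) (hgmin : ∀ d, 0 < d → HasPer g d ℓ → p ≤ d) :
    HeadOf f p = HeadOf g p + 1 ∨ (HeadOf f p = 0 ∧ HeadOf g p = p - 1) := by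
  obtain ⟨hfl, hfe⟩ := headOf_spec f hp0
  obtain ⟨hgl, hge⟩ := headOf_spec g hp0
  have hroot := root_shift f g hg hp0 h2p hf
  have h1 : HeadOf f p ≤ HeadOf g p + 1 := by
    apply Nat.sInf_le
    show Rot f p (HeadOf g p + 1) = RootOf f p
    rw [← rot_succ f g hg p (HeadOf g p), hge, hroot]
  rcases Nat.eq_zero_or_pos (HeadOf f p) with h0 | hpos
  · right
    refine ⟨h0, ?_⟩
    by_contra hne
    have hlt : HeadOf g p < p - 1 := by omega
    have hEq : Rot g p (HeadOf g p) = Rot g p (p - 1) := by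
      rw [hge, ← hroot, ← hfe, h0, rot_wrap f g hg h2p hf]
    unfold Rot at hEq
    have hpt : ∀ t < p, g (HeadOf g p + t) = g (p - 1 + t) := by
      intro t ht
      exact (List.map_inj_left).mp hEq t (List.mem_range.mpr ht)
    have hper := per_of_rot_eq hgood (by omega) hlt (by omega) hpt
    have := hgmin (p - 1 - HeadOf g p) (by omega) hper
    omega
  · left
    obtain ⟨s, hs⟩ : ∃ s, HeadOf f p = s + 1 := ⟨HeadOf f p - 1, by omega⟩
    have hres : Rot g p s = RootOf g p := by
      rw [rot_succ f g hg p s, ← hs, hfe, hroot]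
    have h2 : HeadOf g p ≤ s := Nat.sInf_le hres
    omega

end Ordered
section Bridge
variable {α : Type*}
open LZ

/-- The window function (0-based) of the suffix of `T` starting at 1-based position `a`. -/
def Wf (T : ℕ → α) (a : ℕ) : ℕ → α := fun t => T (a + t)

lemma sufP_app (T : ℕ → α) (a x y : ℕ) (h : x = y + 1) : sufP T a x = Wf T a y := by
  unfold sufP Wf; congr 1; omega

lemma Wf_succ (T : ℕ → α) (a t : ℕ) : Wf T (a + 1) t = Wf T a (t + 1) := by
  unfold Wf; congr 1; omega

lemma perP_eq (T : ℕ → α) (a ℓ : ℕ) : perP (sufP T a) ℓ = minPer (Wf T a) ℓ := by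
  unfold perP minPer
  congr 1
  ext p
  simp only [Set.mem_setOf_eq, HasPer]
  constructor
  · rintro ⟨hp0, h⟩
    refine ⟨hp0, fun t ht => ?_⟩
    have h2 := h t ht
    rwa [sufP_app T a (1 + t) t (by omega), sufP_app T a (1 + t + p) (t + p) (by omega)] at h2
  · rintro ⟨hp0, h⟩
    refine ⟨hp0, fun t ht => ?_⟩
    rw [sufP_app T a (1 + t) t (by omega), sufP_app T a (1 + t + p) (t + p) (by omega)]
    exact h t ht

lemma runendP_eq (τ : ℕ) (T : ℕ → α) (a m : ℕ) :
    runendP τ (sufP T a) m =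
      1 + minPer (Wf T a) (3 * τ - 1) + ExtLen (Wf T a) (minPer (Wf T a) (3 * τ - 1)) m := by
  unfold runendP ExtLen
  rw [perP_eq]
  congr 2
  ext x
  simp only [Set.mem_setOf_eq]
  constructor
  · rintro ⟨h1, h2⟩
    refine ⟨h1, fun t ht => ?_⟩
    have h3 := h2 t ht
    rwa [sufP_app T a (1 + t) t (by omega),
      sufP_app T a (1 + minPer (Wf T a) (3 * τ - 1) + t) (minPer (Wf T a) (3 * τ - 1) + t)
        (by omega)] at h3
  · rintro ⟨h1, h2⟩
    refine ⟨h1, fun t ht => ?_⟩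
    rw [sufP_app T a (1 + t) t (by omega),
      sufP_app T a (1 + minPer (Wf T a) (3 * τ - 1) + t) (minPer (Wf T a) (3 * τ - 1) + t)
        (by omega)]
    exact h2 t ht

lemma rotP_eq (T : ℕ → α) (a p : ℕ) : rotP (sufP T a) p = Rot (Wf T a) p := by
  funext δ
  unfold rotP Rot
  apply List.map_congr_left
  intro t _
  exact sufP_app T a (1 + δ + t) (δ + t) (by omega)

lemma rootP_eq [LinearOrder α] (τ : ℕ) (T : ℕ → α) (a : ℕ) :
    rootP τ (sufP T a) = RootOf (Wf T a) (minPer (Wf T a) (3 * τ - 1)) := by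
  unfold rootP RootOf
  rw [perP_eq, rotP_eq]

lemma headP_eq [LinearOrder α] (τ : ℕ) (T : ℕ → α) (a : ℕ) :
    headP τ (sufP T a) = HeadOf (Wf T a) (minPer (Wf T a) (3 * τ - 1)) := by
  unfold headP HeadOf
  rw [perP_eq, rotP_eq, rootP_eq]

end Bridge
end RunAux

open LZ in
/-- For `τ ∈ [1..⌊n/2⌋]` and every position `j` with both `j` and
`j - 1` in `R(τ,T)`, the `τ`-runs at `j-1` and `j` agree: same Lyndon root, same
run end, same tail, same full run end, and same type. -/
theorem run_invariants_shift {α : Type*} [LinearOrder α] (τ n : ℕ) (T : ℕ → α)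
    (hτ : 1 ≤ τ) (hn : 2 * τ ≤ n)
    (j : ℕ) (hj : j ∈ Rset τ n T) (hj' : j - 1 ∈ Rset τ n T) :
    rootT τ T (j - 1) = rootT τ T j ∧
    runEndT τ n T (j - 1) = runEndT τ n T j ∧
    tailT τ n T (j - 1) = tailT τ n T j ∧
    runEndFullT τ n T (j - 1) = runEndFullT τ n T j ∧
    (typePosT τ n T (j - 1) ↔ typePosT τ n T j) := by
  obtain ⟨i, rfl⟩ : ∃ i, j = i + 2 := ⟨j - 2, by have := hj'.1; omega⟩
  have hj1 : (i + 2 : ℕ) - 1 = i + 1 := rfl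
  simp only [hj1] at hj' ⊢
  obtain ⟨ha1, ha2, ha3⟩ := hj'
  obtain ⟨hb1, hb2, hb3⟩ := hj
  -- the two window functions and their shift relation
  have hgrel : ∀ t, RunAux.Wf T (i + 2) t = RunAux.Wf T (i + 1) (t + 1) := by
    intro t; unfold RunAux.Wf; congr 1; omega
  set f := RunAux.Wf T (i + 1) with hf_def
  set g := RunAux.Wf T (i + 2) with hg_def
  -- minimal periods
  have hp3 : 3 * RunAux.minPer f (3 * τ - 1) ≤ τ := by
    rw [hf_def, ← RunAux.perP_eq]; exact ha3
  have hq3 : 3 * RunAux.minPer g (3 * τ - 1) ≤ τ := by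
    rw [hg_def, ← RunAux.perP_eq]; exact hb3
  have hpq : RunAux.minPer f (3 * τ - 1) = RunAux.minPer g (3 * τ - 1) :=
    RunAux.minPer_shift f g hgrel τ hτ hp3 hq3
  set p := RunAux.minPer f (3 * τ - 1) with hp_def
  have hℓ0 : 0 < 3 * τ - 1 := by omega
  obtain ⟨hp0, hfper⟩ := RunAux.minPer_mem (f := f) hℓ0
  obtain ⟨hq0, hgper0⟩ := RunAux.minPer_mem (f := g) hℓ0
  rw [← hp_def] at hp0 hfper
  rw [← hpq] at hgper0
  have hgmin : ∀ d, 0 < d → RunAux.HasPer g d (3 * τ - 1) → p ≤ d := by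
    intro d hd hper
    rw [hpq]
    exact RunAux.minPer_le hd hper
  have hτ3 : 3 ≤ τ := by omega
  have h2p : 2 * p ≤ 3 * τ - 1 := by omega
  have hpℓ : p < 3 * τ - 1 := by omega
  have hni : i + 3 * τ ≤ n := by omega
  have hm1 : n + 1 - (i + 1) = (n - i - 1) + 1 := by omega
  have hm2 : n + 1 - (i + 2) = n - i - 1 := by omega
  have hpm : p ≤ n - i - 1 := by omega
  -- extension lengths
  have hX : RunAux.ExtLen f p ((n - i - 1) + 1) = RunAux.ExtLen g p (n - i - 1) + 1 :=
    RunAux.extLen_shift f g hgrel hp0 hpℓ hfper hpm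
  set Xg := RunAux.ExtLen g p (n - i - 1) with hXg_def
  -- run ends
  have hRE_f : runendP τ (sufP T (i + 1)) (n + 1 - (i + 1)) = 1 + p + Xg + 1 := by
    rw [RunAux.runendP_eq, hm1, ← hf_def, ← hp_def, hX]
    omega
  have hRE_g : runendP τ (sufP T (i + 2)) (n + 1 - (i + 2)) = 1 + p + Xg := by
    rw [RunAux.runendP_eq, hm2, ← hg_def, ← hpq, ← hXg_def]
  -- heads
  have hHf : headP τ (sufP T (i + 1)) = RunAux.HeadOf f p := by
    rw [RunAux.headP_eq, ← hf_def, ← hp_def]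
  have hHg : headP τ (sufP T (i + 2)) = RunAux.HeadOf g p := by
    rw [RunAux.headP_eq, ← hg_def, ← hpq]
  have hhead := RunAux.head_shift f g hgrel hp0 h2p hfper hgper0 hgmin
  have hhf_lt : RunAux.HeadOf f p < p := (RunAux.headOf_spec f hp0).1
  have hhg_lt : RunAux.HeadOf g p < p := (RunAux.headOf_spec g hp0).1
  -- perP rewrites
  have hPf : perP (sufP T (i + 1)) (3 * τ - 1) = p := by rw [RunAux.perP_eq, ← hf_def, ← hp_def]
  have hPg : perP (sufP T (i + 2)) (3 * τ - 1) = p := by rw [RunAux.perP_eq, ← hg_def, ← hpq]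
  -- tails
  have htail : tailT τ n T (i + 1) = tailT τ n T (i + 2) := by
    unfold tailT tailP
    rw [hRE_f, hRE_g, hHf, hHg, hPf, hPg]
    rcases hhead with hcase | ⟨hcase0, hcasep⟩
    · rw [hcase]
      congr 1
      omega
    · rw [hcase0, hcasep]
      rw [show 1 + p + Xg + 1 - 1 - 0 = Xg + 1 + p by omega,
        show 1 + p + Xg - 1 - (p - 1) = Xg + 1 by omega]
      exact Nat.add_mod_right (Xg + 1) p
  have htg_lt : tailT τ n T (i + 2) < p := by
    unfold tailT tailP
    rw [hPg]
    exact Nat.mod_lt _ hp0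
  refine ⟨?_, ?_, htail, ?_, ?_⟩
  · -- roots
    unfold rootT
    rw [RunAux.rootP_eq, RunAux.rootP_eq, ← hf_def, ← hg_def, ← hp_def, ← hpq]
    exact RunAux.root_shift f g hgrel hp0 h2p hfper
  · -- run ends
    unfold runEndT
    rw [hRE_f, hRE_g]
    omega
  · -- full run ends
    have htf := htail
    unfold tailT at htf htg_lt
    unfold runEndFullT runendfullP
    rw [hRE_f, hRE_g, htf]
    omega
  · -- types
    unfold typePosT typePosP
    rw [hRE_f, hRE_g, hPf, hPg, hm1, hm2]
    apply and_congr
    · constructor <;> (intro h; omega)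
    · have e1 : sufP T (i + 1) (1 + p + Xg + 1 - p) = sufP T (i + 2) (1 + p + Xg - p) := by
        unfold sufP; congr 1; omega
      have e2 : sufP T (i + 1) (1 + p + Xg + 1) = sufP T (i + 2) (1 + p + Xg) := by
        unfold sufP; congr 1; omega
      rw [e1, e2]
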